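/- Let φ be a summable function on a countable Markov shift X with β_∞(φ) < 1, and let P(φ) be finite. Define F(μ) = -P(φ) + h(μ) + ∫φ dμ for shift-invariant probability measures μ with ∫φ dμ > -∞. If (μ_k) is a sequence of such measures for which F(μ_k) converges to a finite number as k → ∞, then inf_{k≥1} ∫φ dμ_k > -∞. -/
import Mathlib

open Filter

/-- Abstract form of Lemma 2.2. Let `M` stand for the set of shift-invariant Borel
probability measures `μ` with `∫φ dμ > -∞` on the countable Markov shift, with
entropy `ent μ = h(μ) ≥ 0` and integral `intφ μ = ∫φ dμ ∈ ℝ`, where `φ` is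
summable with `β_∞(φ) = βinf < 1` (and `βinf ≥ 0`). Assume the conclusion of the
previous lemma: for every `δ > 0` there is `K(δ)` such that `ent μ/(-intφ μ) > βinf + δ`
implies `intφ μ ≥ K(δ)`. Let `P(φ) = Pφ ∈ ℝ` and `F(μ) = -P(φ) + h(μ) + ∫φ dμ`.
If `(μ_k)` is a sequence in `M` with `F(μ_k)` converging to a finite number `L`,
then `inf_k ∫φ dμ_k > -∞`. -/
theorem stmt5 {M : Type*} (ent intφ : M → ℝ)
    (hent : ∀ μ : M, 0 ≤ ent μ)
    (βinf : ℝ) (hβ0 : 0 ≤ βinf) (hβ1 : βinf < 1)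
    (hlem : ∀ δ : ℝ, 0 < δ → ∃ K : ℝ, ∀ μ : M,
      ent μ / (-intφ μ) > βinf + δ → intφ μ ≥ K)
    (Pφ L : ℝ) (μ : ℕ → M)
    (hF : Tendsto (fun k => -Pφ + ent (μ k) + intφ (μ k)) atTop (nhds L)) :
    BddBelow (Set.range fun k => intφ (μ k)) := by
  set δ : ℝ := (1 - βinf) / 2 with hδdef
  have hδ : 0 < δ := by linarith
  obtain ⟨K, hK⟩ := hlem δ hδ
  -- F is bounded below
  obtain ⟨B, hB⟩ := (hF.isBoundedUnder_ge).bddBelow_range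
  refine ⟨min K (min 0 ((B + Pφ) / δ)), ?_⟩
  rintro x ⟨k, rfl⟩
  by_cases h0 : 0 ≤ intφ (μ k)
  · exact le_trans (le_trans (min_le_right _ _) (min_le_left _ _)) h0
  push_neg at h0
  by_cases hcase : ent (μ k) / (-intφ (μ k)) > βinf + δ
  · exact le_trans (min_le_left _ _) (hK _ hcase)
  · push_neg at hcase
    have hpos : 0 < -intφ (μ k) := by linarith
    have h1 : ent (μ k) ≤ (βinf + δ) * (-intφ (μ k)) := by
      rw [div_le_iff₀ hpos] at hcase; linarith [hcase]
    have hBk : B ≤ -Pφ + ent (μ k) + intφ (μ k) := hB ⟨k, rfl⟩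
    have h2 : B ≤ -Pφ + (βinf + δ) * (-intφ (μ k)) + intφ (μ k) := by linarith
    have h3 : B + Pφ ≤ δ * intφ (μ k) := by
      have heq : (βinf + δ) * (-intφ (μ k)) + intφ (μ k) = δ * intφ (μ k) := by
        rw [hδdef]; ring
      linarith [h2, heq]
    have : (B + Pφ) / δ ≤ intφ (μ k) := by
      rw [div_le_iff₀ hδ, mul_comm]; exact h3
    exact le_trans (le_trans (min_le_right _ _) (min_le_right _ _)) this
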